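/- The finite bonds of any graph G form the circuits of a finitary matroid on E(G). -/

import Mathlib

variable {V : Type*}

/-- A circuit of a (possibly infinite) matroid: a minimal dependent subset of the ground set. -/
def MatroidCircuit {α : Type*} (M : Matroid α) (C : Set α) : Prop :=
  C ⊆ M.E ∧ ¬ M.Indep C ∧ ∀ D : Set α, D ⊂ C → M.Indep D

/-- The cut of a graph `G` determined by a vertex set `A`. -/
def cutEdges (G : SimpleGraph V) (A : Set V) : Set (Sym2 V) :=
  {e | e ∈ G.edgeSet ∧ ∃ u v : V, e = s(u, v) ∧ u ∈ A ∧ v ∉ A}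

/-- A bond of `G`: a minimal non-empty cut. -/
def IsBond (G : SimpleGraph V) (B : Set (Sym2 V)) : Prop :=
  Minimal (fun D => D.Nonempty ∧ ∃ A : Set V, D = cutEdges G A) B

lemma cutEdges_subset_edgeSet (G : SimpleGraph V) (A : Set V) :
    cutEdges G A ⊆ G.edgeSet := fun _ he => he.1

open scoped Classical

lemma bond_sum_count_eq_countP {α : Type*} [DecidableEq α] (s : Finset α) (l : List α) :
    ∑ e ∈ s, l.count e = l.countP (fun e => decide (e ∈ s)) := by
  induction l with
  | nil => simp
  | cons a l ih =>
    rw [List.countP_cons]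
    simp only [List.count_cons, beq_iff_eq]
    rw [Finset.sum_add_distrib, ih, Finset.sum_ite_eq s a (fun _ => 1)]
    simp

lemma bond_mem_cutEdges {G : SimpleGraph V} {A : Set V} {x y : V} (h : G.Adj x y) :
    s(x, y) ∈ cutEdges G A ↔ ((x ∈ A ∧ y ∉ A) ∨ (y ∈ A ∧ x ∉ A)) := by
  constructor
  · rintro ⟨-, u, v, huv, hu, hv⟩
    rw [Sym2.eq_iff] at huv
    rcases huv with ⟨rfl, rfl⟩ | ⟨rfl, rfl⟩
    · exact Or.inl ⟨hu, hv⟩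
    · exact Or.inr ⟨hu, hv⟩
  · rintro (⟨hx, hy⟩ | ⟨hy, hx⟩)
    · exact ⟨h, x, y, rfl, hx, hy⟩
    · exact ⟨h, y, x, Sym2.eq_swap, hy, hx⟩

lemma bond_walk_parity (G : SimpleGraph V) (A : Set V) : ∀ {x y : V} (w : G.Walk x y),
    ((w.edges.countP (fun e => decide (e ∈ cutEdges G A)) : ℕ) : ZMod 2)
      = (if x ∈ A then 1 else 0) + (if y ∈ A then 1 else 0) := by
  have h2 : (1 : ZMod 2) + 1 = 0 := by decide
  intro x y w
  induction w with
  | nil =>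
    rename_i u
    by_cases h : u ∈ A <;> simp [h, h2]
  | @cons x z y h p ih =>
    rw [SimpleGraph.Walk.edges_cons, List.countP_cons]
    push_cast
    rw [ih]
    have hmem := bond_mem_cutEdges (A := A) h
    by_cases hx : x ∈ A <;> by_cases hz : z ∈ A <;>
      simp [hx, hz, hmem] <;> first
        | decide
        | (ring_nf; decide)
        | (by_cases hy : y ∈ A <;> simp [hy] <;> decide)

noncomputable def bondPhi (G : SimpleGraph V) (e : Sym2 V) : (Σ u : V, G.Walk u u) → ZMod 2 :=
  fun w => ((w.2.edges.count e : ℕ) : ZMod 2)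

lemma bond_sum_phi (G : SimpleGraph V) {T : Set (Sym2 V)} (hT : T.Finite)
    (u : V) (w : G.Walk u u) :
    ∑ e ∈ hT.toFinset, bondPhi G e ⟨u, w⟩
      = ((w.edges.countP (fun e => decide (e ∈ T)) : ℕ) : ZMod 2) := by
  unfold bondPhi
  rw [← Nat.cast_sum, bond_sum_count_eq_countP]
  congr 1
  apply List.countP_congr
  intro e _
  simp

/-- L1: the sum of `bondPhi` over a finite cut vanishes on closed walks. -/
lemma bond_sum_phi_cut_eq_zero (G : SimpleGraph V) {B : Set (Sym2 V)} (hB : B.Finite)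
    {A : Set V} (hBA : B = cutEdges G A) (u : V) (w : G.Walk u u) :
    ∑ e ∈ hB.toFinset, bondPhi G e ⟨u, w⟩ = 0 := by
  rw [bond_sum_phi G hB u w]
  subst hBA
  rw [bond_walk_parity G A w]
  by_cases h : u ∈ A <;> simp [h] <;> decide

/-- L2: a finite nonempty edge set whose phi-sum vanishes on all closed walks contains
a nonempty cut. -/
lemma bond_exists_cut_subset (G : SimpleGraph V) {T : Set (Sym2 V)} (hTfin : T.Finite)
    (hTE : T ⊆ G.edgeSet) (hne : T.Nonempty)
    (h0 : ∀ (u : V) (w : G.Walk u u), ∑ e ∈ hTfin.toFinset, bondPhi G e ⟨u, w⟩ = 0) :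
    ∃ D, D ⊆ T ∧ D.Nonempty ∧ ∃ A : Set V, D = cutEdges G A := by
  obtain ⟨e₀, he₀⟩ := hne
  obtain ⟨u, v, rfl⟩ : ∃ a b, e₀ = s(a, b) := Sym2.exists.mp ⟨e₀, rfl⟩
  have hadj : G.Adj u v := G.mem_edgeSet.mp (hTE he₀)
  set A : Set V := {x | (G.deleteEdges T).Reachable u x} with hA
  have hu : u ∈ A := SimpleGraph.Reachable.refl u
  have hv : v ∉ A := by
    intro hr
    obtain ⟨p⟩ := (hr : (G.deleteEdges T).Reachable u v)
    have hpe : ∀ e ∈ p.edges, e ∈ G.edgeSet := by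
      intro e he
      have := p.edges_subset_edgeSet he
      rw [SimpleGraph.edgeSet_deleteEdges] at this
      exact this.1
    have hpnot : ∀ e ∈ p.edges, e ∉ T := by
      intro e he
      have := p.edges_subset_edgeSet he
      rw [SimpleGraph.edgeSet_deleteEdges] at this
      exact this.2
    set q : G.Walk u v := p.transfer G hpe with hq
    have hqe : q.edges = p.edges := p.edges_transfer hpe
    set w : G.Walk u u := q.concat hadj.symm with hw
    have := h0 u w
    rw [bond_sum_phi G hTfin u w] at this
    rw [hw, SimpleGraph.Walk.edges_concat, List.concat_eq_append, List.countP_append, hqe] at this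
    have hcq : (p.edges.countP (fun e => decide (e ∈ T))) = 0 := by
      rw [List.countP_eq_zero]
      intro e he
      simpa using hpnot e he
    have hvu : s(v, u) ∈ T := by rwa [Sym2.eq_swap]
    rw [hcq] at this
    simp [hvu] at this
  refine ⟨cutEdges G A, ?_, ⟨s(u, v), hadj, u, v, rfl, hu, hv⟩, A, rfl⟩
  rintro e ⟨heE, x, y, rfl, hx, hy⟩
  by_contra heT
  have hadj' : (G.deleteEdges T).Adj x y := by
    rw [SimpleGraph.deleteEdges_adj]
    exact ⟨G.mem_edgeSet.mp heE, heT⟩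
  exact hy ((hx : (G.deleteEdges T).Reachable u x).trans hadj'.reachable)

/-- L3: a finite nonempty cut contains a bond. -/
lemma bond_exists_bond_subset (G : SimpleGraph V) {D : Set (Sym2 V)} (hDfin : D.Finite)
    (hne : D.Nonempty) (hcut : ∃ A : Set V, D = cutEdges G A) :
    ∃ B, B ⊆ D ∧ B.Finite ∧ IsBond G B := by
  set S : Set (Set (Sym2 V)) :=
    {D' | D' ⊆ D ∧ D'.Nonempty ∧ ∃ A : Set V, D' = cutEdges G A} with hS
  have hSfin : S.Finite := hDfin.finite_subsets.subset (fun D' hD' => hD'.1)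
  have hSne : S.Nonempty := ⟨D, Set.Subset.rfl, hne, hcut⟩
  obtain ⟨B, hBS, hBmin⟩ : ∃ B ∈ S, ∀ a' ∈ S, id a' ≤ id B → id B = id a' := by
    obtain ⟨B, hB⟩ := hSfin.exists_minimal hSne
    exact ⟨B, hB.1, fun a' ha' hle => le_antisymm (hB.2 ha' hle) hle⟩
  refine ⟨B, hBS.1, hDfin.subset hBS.1, ⟨hBS.2.1, hBS.2.2⟩, ?_⟩
  intro y hy hyB
  have hyS : y ∈ S := ⟨hyB.trans hBS.1, hy⟩
  exact (hBmin y hyS hyB).le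

lemma bond_sum_indicator {α M : Type*} [AddCommMonoid M] {X T : Set α} [Fintype X]
    (hTX : T ⊆ X) (hTfin : T.Finite) (f : α → M) :
    ∑ i : X, (if (i : α) ∈ T then f i else 0) = ∑ e ∈ hTfin.toFinset, f e := by
  rw [← Finset.sum_filter]
  refine Finset.sum_bij (fun i _ => (i : α)) ?_ ?_ ?_ ?_
  · intro a ha
    simp only [Finset.mem_filter] at ha
    simpa using ha.2
  · intro a ha b hb hab
    exact Subtype.ext hab
  · intro e he
    simp only [Set.Finite.mem_toFinset] at he
    exact ⟨⟨e, hTX he⟩, by simpa using he, rfl⟩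
  · intro a ha
    rfl

lemma bond_not_linIndep_of_bond (G : SimpleGraph V) {X B : Set (Sym2 V)} (hXfin : X.Finite)
    (hBX : B ⊆ X) (hBfin : B.Finite) (hB : IsBond G B) :
    ¬ LinearIndependent (ZMod 2) (fun e : X => bondPhi G e) := by
  haveI := hXfin.fintype
  rw [Fintype.not_linearIndependent_iff]
  obtain ⟨hBne, A, hBA⟩ := hB.prop
  refine ⟨fun e => if (e : Sym2 V) ∈ B then 1 else 0, ?_, ?_⟩
  · funext w
    rw [Finset.sum_apply]
    have : ∀ i : X, ((if (i : Sym2 V) ∈ B then (1 : ZMod 2) else 0) • bondPhi G i) w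
        = (if (i : Sym2 V) ∈ B then bondPhi G i w else 0) := by
      intro i
      by_cases h : (i : Sym2 V) ∈ B <;> simp [h]
    obtain ⟨u, wk⟩ := w
    rw [Finset.sum_congr rfl (fun i _ => this i),
      bond_sum_indicator hBX hBfin (fun e => bondPhi G e ⟨u, wk⟩), Pi.zero_apply]
    exact bond_sum_phi_cut_eq_zero G hBfin hBA u wk
  · obtain ⟨e₀, he₀⟩ := hBne
    exact ⟨⟨e₀, hBX he₀⟩, by simp [he₀]⟩

lemma bond_exists_bond_of_not_linIndep (G : SimpleGraph V) {X : Set (Sym2 V)}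
    (hXfin : X.Finite) (hXE : X ⊆ G.edgeSet)
    (h : ¬ LinearIndependent (ZMod 2) (fun e : X => bondPhi G e)) :
    ∃ B, B ⊆ X ∧ B.Finite ∧ IsBond G B := by
  haveI := hXfin.fintype
  rw [Fintype.not_linearIndependent_iff] at h
  obtain ⟨g, hsum, i₀, hi₀⟩ := h
  set T : Set (Sym2 V) := {e : Sym2 V | ∃ h : e ∈ X, g ⟨e, h⟩ ≠ 0} with hT
  have hTX : T ⊆ X := fun e he => he.1
  have hTfin : T.Finite := hXfin.subset hTX
  have hTne : T.Nonempty := ⟨(i₀ : Sym2 V), i₀.2, by simpa using hi₀⟩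
  have hg : ∀ i : X, g i • bondPhi G (i : Sym2 V)
      = (if (i : Sym2 V) ∈ T then bondPhi G (i : Sym2 V) else 0) := by
    intro i
    by_cases h : (i : Sym2 V) ∈ T
    · have hne : g i ≠ 0 := by
        obtain ⟨hm, hn⟩ := h
        exact (Subtype.coe_eta i hm) ▸ hn
      have hg1 : g i = 1 := by
        have h01 : ∀ a : ZMod 2, a = 0 ∨ a = 1 := by decide
        rcases h01 (g i) with h' | h'
        · exact absurd h' hne
        · exact h'
      simp [h, hg1]
    · have hg0 : g i = 0 := by
        by_contra hne
        exact h ⟨i.2, (Subtype.coe_eta i i.2).symm ▸ hne⟩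
      simp [h, hg0]
  have h0 : ∀ (u : V) (w : G.Walk u u), ∑ e ∈ hTfin.toFinset, bondPhi G e ⟨u, w⟩ = 0 := by
    intro u w
    have hsum' := congrFun hsum ⟨u, w⟩
    rw [Finset.sum_apply] at hsum'
    simp only [Pi.zero_apply] at hsum'
    refine Eq.trans ?_ hsum'
    rw [← bond_sum_indicator hTX hTfin (fun e => bondPhi G e ⟨u, w⟩)]
    apply Finset.sum_congr rfl
    intro i _
    have h2 := congrFun (hg i) ⟨u, w⟩
    simp only [apply_ite (fun f : ((Σ x : V, G.Walk x x) → ZMod 2) => f ⟨u, w⟩),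
      Pi.zero_apply] at h2
    convert h2.symm using 2
  obtain ⟨D, hDT, hDne, hDcut⟩ := bond_exists_cut_subset G hTfin (hTX.trans hXE) hTne h0
  obtain ⟨B, hBD, hBfin, hBbond⟩ :=
    bond_exists_bond_subset G (hTfin.subset hDT) hDne hDcut
  exact ⟨B, (hBD.trans hDT).trans hTX, hBfin, hBbond⟩

lemma bond_exchange {K W α : Type*} [Field K] [AddCommGroup W] [Module K W]
    (v : α → W) {I J : Set α} (hIfin : I.Finite) (hJfin : J.Finite)
    (hI : LinearIndependent K (fun i : I => v i)) (hJ : LinearIndependent K (fun j : J => v j))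
    (hcard : I.ncard < J.ncard) :
    ∃ e ∈ J, e ∉ I ∧ LinearIndependent K (fun i : (insert e I : Set α) => v i) := by
  by_contra hcon
  push_neg at hcon
  have hspan : ∀ e ∈ J, v e ∈ Submodule.span K (v '' I) := by
    intro e he
    by_cases heI : e ∈ I
    · exact Submodule.subset_span ⟨e, heI, rfl⟩
    by_contra hnot
    exact hcon e he heI ((linearIndepOn_insert heI).2 ⟨hI, hnot⟩)
  haveI := hIfin.fintype
  haveI := hJfin.fintype
  haveI : Fintype (v '' I) := (hIfin.image v).fintype
  set S := Submodule.span K (v '' I) with hS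
  haveI : FiniteDimensional K S := FiniteDimensional.span_of_finite K (hIfin.image v)
  have hJS : LinearIndependent K (fun j : J => (⟨v j, hspan j j.2⟩ : S)) := by
    apply LinearIndependent.of_comp S.subtype
    exact hJ
  have h1 : Fintype.card J ≤ Module.finrank K S := hJS.fintype_card_le_finrank
  have h2 : Module.finrank K S ≤ (v '' I).toFinset.card := finrank_span_le_card (v '' I)
  have h3 : (v '' I).toFinset.card = (v '' I).ncard := (Set.ncard_eq_toFinset_card' _).symm
  have h4 : (v '' I).ncard ≤ I.ncard := Set.ncard_image_le hIfin
  have h5 : J.ncard = Fintype.card J := by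
    rw [Set.ncard_eq_toFinset_card' J, Set.toFinset_card]
  omega

/-- The finite bonds of any graph `G` form the circuits of a finitary matroid on `E(G)`. -/
theorem finite_bond_matroid_exists (G : SimpleGraph V) :
    ∃ M : Matroid (Sym2 V), M.E = G.edgeSet ∧ M.Finitary ∧
      ∀ C : Set (Sym2 V), MatroidCircuit M C ↔ (C.Finite ∧ IsBond G C) := by
  set Ind : Set (Sym2 V) → Prop :=
    fun X => X ⊆ G.edgeSet ∧ ∀ B ⊆ X, ¬(B.Finite ∧ IsBond G B) with hInd
  have ind_lin : ∀ X : Set (Sym2 V), X.Finite → X ⊆ G.edgeSet →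
      (Ind X ↔ LinearIndependent (ZMod 2) (fun e : X => bondPhi G e)) := by
    intro X hfin hXE
    constructor
    · intro hX
      by_contra h
      obtain ⟨B, hBX, hBfin, hBbond⟩ := bond_exists_bond_of_not_linIndep G hfin hXE h
      exact hX.2 B hBX ⟨hBfin, hBbond⟩
    · intro h
      refine ⟨hXE, fun B hBX hB => ?_⟩
      exact bond_not_linIndep_of_bond G hfin hBX hB.1 hB.2 h
  set M' : IndepMatroid (Sym2 V) := IndepMatroid.ofFinitaryCardAugment G.edgeSet Ind
    (by
      refine ⟨Set.empty_subset _, fun B hB h => ?_⟩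
      obtain ⟨hBne, -⟩ := h.2.prop
      obtain ⟨e, he⟩ := hBne
      exact (hB he).elim)
    (by
      rintro I J ⟨hJE, hJb⟩ hIJ
      exact ⟨hIJ.trans hJE, fun B hBI => hJb B (hBI.trans hIJ)⟩)
    (by
      rintro I J hI hIfin hJ hJfin hcard
      have hIl := (ind_lin I hIfin hI.1).mp hI
      have hJl := (ind_lin J hJfin hJ.1).mp hJ
      obtain ⟨e, heJ, heI, hlin⟩ := bond_exchange (bondPhi G) hIfin hJfin hIl hJl hcard
      refine ⟨e, heJ, heI, ?_⟩
      have hins : (insert e I : Set (Sym2 V)) ⊆ G.edgeSet :=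
        Set.insert_subset (hJ.1 heJ) hI.1
      exact (ind_lin _ (hIfin.insert e) hins).mpr hlin)
    (by
      intro I h
      refine ⟨fun e he => ?_, fun B hBI hB => ?_⟩
      · exact (h {e} (Set.singleton_subset_iff.mpr he) (Set.finite_singleton e)).1 rfl
      · exact (h B hBI hB.1).2 B Set.Subset.rfl hB)
    (fun I hI => hI.1)
  refine ⟨M'.matroid, by simp [M'], by infer_instance, ?_⟩
  intro C
  have hMind : ∀ X, M'.matroid.Indep X ↔ Ind X := by
    intro X
    rw [IndepMatroid.matroid_indep_iff]
    simp [M', hInd]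
  have hME : M'.matroid.E = G.edgeSet := by simp [M']
  constructor
  · rintro ⟨hCE, hCdep, hCmin⟩
    rw [hMind] at hCdep
    rw [hME] at hCE
    obtain ⟨B, hBC, hBfin, hBbond⟩ : ∃ B ⊆ C, B.Finite ∧ IsBond G B := by
      by_contra hno
      push_neg at hno
      exact hCdep ⟨hCE, fun B hB hb => hno B hB hb.1 hb.2⟩
    have hBC' : B = C := by
      by_contra hne
      have hss : B ⊂ C := ⟨hBC, fun h => hne (le_antisymm hBC h)⟩
      have := (hMind B).mp (hCmin B hss)
      exact this.2 B Set.Subset.rfl ⟨hBfin, hBbond⟩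
    rw [← hBC']
    exact ⟨hBfin, hBbond⟩
  · rintro ⟨hCfin, hCbond⟩
    obtain ⟨hCne, A, hCA⟩ := hCbond.prop
    have hCE : C ⊆ G.edgeSet := by
      rw [hCA]; exact cutEdges_subset_edgeSet G A
    refine ⟨by rwa [hME], ?_, ?_⟩
    · rw [hMind]
      rintro ⟨-, hno⟩
      exact hno C Set.Subset.rfl ⟨hCfin, hCbond⟩
    · intro D hD
      rw [hMind]
      refine ⟨hD.subset.trans hCE, fun B hBD hB => ?_⟩
      have hBC : B ⊆ C := hBD.trans hD.subset
      have := hCbond.2 hB.2.prop hBC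
      have hDC : ¬ C ⊆ D := fun h => hD.not_subset h
      exact hDC (this.trans hBD)
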